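/- Fix α > 2 and c > 0, and define f on (0,1) by f(s) = (1 + c²)·arctan(c) + ((1+s)²/(1−s)² + c²)·arctan(c·(1−s)/(1+s)) − 2c/(1−s) − π·c²/α. Then f has at most one zero in (0,1); moreover, if f has a zero in (0,1), then its limit at 0 is strictly positive, i.e., 2·(1 + c²)·arctan(c) − 2c − π·c²/α > 0. -/

import Mathlib

open Real

noncomputable section

/-- The function `f` of Lemma 8, with parameters `α` and `c`. -/
def fval (α c s : ℝ) : ℝ :=
  (1 + c ^ 2) * Real.arctan c
    + ((1 + s) ^ 2 / (1 - s) ^ 2 + c ^ 2) * Real.arctan (c * (1 - s) / (1 + s))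
    - 2 * c / (1 - s) - π * c ^ 2 / α

lemma arctan_lt_self' {x : ℝ} (hx : 0 < x) : Real.arctan x < x := by
  have h1 : 0 < Real.arctan x := by
    have := Real.arctan_strictMono hx
    rwa [Real.arctan_zero] at this
  have h2 : Real.arctan x < π / 2 := Real.arctan_lt_pi_div_two x
  have := Real.lt_tan h1 h2
  rwa [Real.tan_arctan] at this

lemma fval_hasDerivAt (α c s : ℝ) (hs1 : -1 < s) (hs2 : s < 1) :
    HasDerivAt (fval α c)
      (4 * (1 + s) / (1 - s) ^ 3 *
        (Real.arctan (c * (1 - s) / (1 + s)) - c * (1 - s) / (1 + s))) s := by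
  have h1 : (1 - s) ≠ 0 := by nlinarith
  have h2 : (1 + s) ≠ 0 := by nlinarith
  have hX : (1 : ℝ) + (c * (1 - s) / (1 + s)) ^ 2 ≠ 0 := by positivity
  have hA : HasDerivAt (fun s : ℝ => (1 + s) ^ 2) (2 * (1 + s) ^ 1 * 1) s :=
    ((hasDerivAt_id s).const_add 1).pow 2
  have hB : HasDerivAt (fun s : ℝ => (1 - s) ^ 2) (2 * (1 - s) ^ 1 * -1) s :=
    ((hasDerivAt_id s).const_sub 1).pow 2
  have hq := hA.div hB (pow_ne_zero 2 h1)
  have hnum : HasDerivAt (fun s : ℝ => c * (1 - s)) (c * -1) s :=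
    ((hasDerivAt_id s).const_sub 1).const_mul c
  have hden : HasDerivAt (fun s : ℝ => 1 + s) (1 : ℝ) s := (hasDerivAt_id s).const_add 1
  have hinner := hnum.div hden h2
  have harc := hinner.arctan
  have hmul := (hq.add_const (c ^ 2)).mul harc
  have hinv := (((hasDerivAt_id s).const_sub 1).inv h1).const_mul (2 * c)
  have htot := (((hmul.const_add ((1 + c ^ 2) * Real.arctan c)).sub hinv).sub_const
    (π * c ^ 2 / α))
  have hfval : fval α c = fun s : ℝ =>
      (1 + c ^ 2) * Real.arctan c
        + ((1 + s) ^ 2 / (1 - s) ^ 2 + c ^ 2) * Real.arctan (c * (1 - s) / (1 + s))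
        - 2 * c / (1 - s) - π * c ^ 2 / α := rfl
  rw [hfval]
  refine htot.congr_deriv ?_
  simp only [Pi.div_apply, id]
  field_simp
  ring

lemma fval_strictAntiOn (α c : ℝ) (hc : 0 < c) :
    StrictAntiOn (fval α c) (Set.Ico (0 : ℝ) 1) := by
  apply strictAntiOn_of_deriv_neg (convex_Ico 0 1)
  · intro x hx
    exact (fval_hasDerivAt α c x (by linarith [hx.1]) hx.2).continuousAt.continuousWithinAt
  · intro x hx
    rw [interior_Ico] at hx
    obtain ⟨hx0, hx1⟩ := hx
    rw [(fval_hasDerivAt α c x (by linarith) hx1).deriv]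
    have hx1' : (0:ℝ) < 1 - x := by linarith
    have hx2' : (0:ℝ) < 1 + x := by linarith
    have hXpos : 0 < c * (1 - x) / (1 + x) := by positivity
    have harc : Real.arctan (c * (1 - x) / (1 + x)) - c * (1 - x) / (1 + x) < 0 :=
      sub_neg.mpr (arctan_lt_self' hXpos)
    have hcoef : 0 < 4 * (1 + x) / (1 - x) ^ 3 := by
      have : (0:ℝ) < 1 - x := by linarith
      positivity
    exact mul_neg_of_pos_of_neg hcoef harc

lemma fval_zero (α c : ℝ) :
    fval α c 0 = 2 * (1 + c ^ 2) * Real.arctan c - 2 * c - π * c ^ 2 / α := by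
  simp [fval]
  ring

/-- **Lemma.** For `α > 2` and `c > 0`, the function `f` has at most one zero in `(0,1)`;
and if it has a zero there, then its limit at `0`, namely
`2(1+c²) arctan c - 2c - π c²/α`, is strictly positive. -/
theorem stmt15 (α c : ℝ) (hα : 2 < α) (hc : 0 < c) :
    (∀ s₁ ∈ Set.Ioo (0 : ℝ) 1, ∀ s₂ ∈ Set.Ioo (0 : ℝ) 1,
      fval α c s₁ = 0 → fval α c s₂ = 0 → s₁ = s₂) ∧
    ((∃ s ∈ Set.Ioo (0 : ℝ) 1, fval α c s = 0) →
      0 < 2 * (1 + c ^ 2) * Real.arctan c - 2 * c - π * c ^ 2 / α) := by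
  have hanti := fval_strictAntiOn α c hc
  constructor
  · intro s₁ hs₁ s₂ hs₂ h₁ h₂
    exact hanti.injOn ⟨hs₁.1.le, hs₁.2⟩ ⟨hs₂.1.le, hs₂.2⟩ (h₁.trans h₂.symm)
  · rintro ⟨s, hs, hfs⟩
    have h0 : fval α c 0 > fval α c s :=
      hanti (by constructor <;> norm_num) ⟨hs.1.le, hs.2⟩ hs.1
    rw [hfs, fval_zero] at h0
    exact h0
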